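/- For any unit vectors b₁ = (cos φ, sin φ), b₂ = (cos η, sin η) in ℝ² with sin φ ≠ 0, sin η ≠ 0, and sin(φ−η) ≠ 0, there exist choices of signs σ₁, σ₂ ∈ {±1} and a possible swap of indices such that the new generators b₁' = σ₁ b_{π(1)}, b₂' = σ₂ b_{π(2)} (π a permutation of {1,2}) satisfy sin(φ'−η')/sin η' < 0 and sin(φ'−η')/sin φ' > 0, where φ', η' are the angles of b₁', b₂'. Moreover {b₁', b₂'} generates the same lattice span_{ℤ}{b₁,b₂}. -/

import Mathlib

open Real

lemma span_pair_neg_left (v w : Fin 2 → ℝ) :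
    Submodule.span ℤ ({-v, w} : Set (Fin 2 → ℝ)) = Submodule.span ℤ ({v, w} : Set (Fin 2 → ℝ)) := by
  apply le_antisymm <;> rw [Submodule.span_le] <;> rintro x (rfl | rfl)
  · exact neg_mem (Submodule.subset_span (Set.mem_insert _ _))
  · exact Submodule.subset_span (Set.mem_insert_of_mem _ rfl)
  · simpa using neg_mem (Submodule.subset_span (Set.mem_insert (-x) {w}))
  · exact Submodule.subset_span (Set.mem_insert_of_mem _ rfl)

lemma span_pair_neg_right (v w : Fin 2 → ℝ) :
    Submodule.span ℤ ({v, -w} : Set (Fin 2 → ℝ)) = Submodule.span ℤ ({v, w} : Set (Fin 2 → ℝ)) := by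
  rw [Set.pair_comm v (-w), span_pair_neg_left, Set.pair_comm]

lemma neg_smul_vec (a b : ℝ) : ![-a, -b] = (-1 : ℝ) • ![a, b] := by
  funext i
  fin_cases i <;> simp

/-- Up to swapping the two generators and changing their signs (operations which do not
change the generated lattice), the sign conditions needed for the grain boundary
construction can always be achieved. -/
theorem stmt7 (φ η : ℝ) (hφ : Real.sin φ ≠ 0) (hη : Real.sin η ≠ 0)
    (hφη : Real.sin (φ - η) ≠ 0)
    (b1 b2 : Fin 2 → ℝ)
    (hb1 : b1 = ![Real.cos φ, Real.sin φ])
    (hb2 : b2 = ![Real.cos η, Real.sin η]) :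
    ∃ (σ1 σ2 : ℝ) (swap : Bool) (φ' η' : ℝ),
      (σ1 = 1 ∨ σ1 = -1) ∧ (σ2 = 1 ∨ σ2 = -1) ∧
      ![Real.cos φ', Real.sin φ'] = σ1 • (if swap then b2 else b1) ∧
      ![Real.cos η', Real.sin η'] = σ2 • (if swap then b1 else b2) ∧
      Real.sin (φ' - η') / Real.sin η' < 0 ∧
      0 < Real.sin (φ' - η') / Real.sin φ' ∧
      Submodule.span ℤ
          ({![Real.cos φ', Real.sin φ'], ![Real.cos η', Real.sin η']} : Set (Fin 2 → ℝ)) =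
        Submodule.span ℤ ({b1, b2} : Set (Fin 2 → ℝ)) := by
  set s := Real.sin (φ - η) with hs
  set a := Real.sin φ with ha
  set b := Real.sin η with hb
  have hsb : s / b ≠ 0 := div_ne_zero hφη hη
  have hsa : s / a ≠ 0 := div_ne_zero hφη hφ
  have hcos1 : Real.cos (φ + π) = -Real.cos φ := Real.cos_add_pi φ
  have hsin1 : Real.sin (φ + π) = -a := Real.sin_add_pi φ
  have hcos2 : Real.cos (η + π) = -Real.cos η := Real.cos_add_pi η
  have hsin2 : Real.sin (η + π) = -b := Real.sin_add_pi η
  have hd1 : Real.sin (φ + π - η) = -s := by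
    rw [show φ + π - η = (φ - η) + π by ring, Real.sin_add_pi]
  have hd2 : Real.sin (φ - (η + π)) = -s := by
    rw [show φ - (η + π) = (φ - η) - π by ring, Real.sin_sub_pi]
  have hd3 : Real.sin (φ + π - (η + π)) = s := by
    rw [show φ + π - (η + π) = φ - η by ring]
  rcases lt_or_gt_of_ne hsb with h1 | h1 <;> rcases lt_or_gt_of_ne hsa with h2 | h2
  · -- s/b < 0, s/a < 0 : flip η
    refine ⟨1, -1, false, φ, η + π, Or.inl rfl, Or.inr rfl, ?_, ?_, ?_, ?_, ?_⟩
    · simp [hb1, ha]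
    · rw [hcos2, hsin2, neg_smul_vec, hb2]; simp
    · rw [hd2, hsin2, neg_div_neg_eq]; exact h1
    · rw [hd2, neg_div]; linarith
    · rw [hcos2, hsin2, neg_smul_vec, hb1, hb2]
      rw [show ((-1:ℝ) • ![Real.cos η, b]) = -![Real.cos η, b] by simp]
      exact span_pair_neg_right _ _
  · -- s/b < 0, s/a > 0 : identity
    refine ⟨1, 1, false, φ, η, Or.inl rfl, Or.inl rfl, by simp [hb1, ha], by simp [hb2, hb], h1, h2,
      by rw [hb1, hb2]⟩
  · -- s/b > 0, s/a < 0 : flip both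
    refine ⟨-1, -1, false, φ + π, η + π, Or.inr rfl, Or.inr rfl, ?_, ?_, ?_, ?_, ?_⟩
    · rw [hcos1, hsin1, neg_smul_vec, hb1]; simp
    · rw [hcos2, hsin2, neg_smul_vec, hb2]; simp
    · rw [hd3, hsin2, div_neg]; linarith
    · rw [hd3, hsin1, div_neg]; linarith
    · rw [hcos1, hsin1, hcos2, hsin2, neg_smul_vec, neg_smul_vec, hb1, hb2]
      rw [show ((-1:ℝ) • ![Real.cos φ, a]) = -![Real.cos φ, a] by simp]
      rw [show ((-1:ℝ) • ![Real.cos η, b]) = -![Real.cos η, b] by simp]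
      rw [span_pair_neg_left, span_pair_neg_right]
  · -- s/b > 0, s/a > 0 : flip φ
    refine ⟨-1, 1, false, φ + π, η, Or.inr rfl, Or.inl rfl, ?_, ?_, ?_, ?_, ?_⟩
    · rw [hcos1, hsin1, neg_smul_vec, hb1]; simp
    · simp [hb2, hb]
    · rw [hd1, neg_div]; linarith
    · rw [hd1, hsin1, neg_div_neg_eq]; exact h2
    · rw [hcos1, hsin1, neg_smul_vec, hb1, hb2]
      rw [show ((-1:ℝ) • ![Real.cos φ, a]) = -![Real.cos φ, a] by simp]
      exact span_pair_neg_left _ _
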